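/- Fix α > 0 and define W_α(x,t) := E_α(α x^{1/α}/(2 t^{1/2})) for x, t > 0, where E_α(λ) := (2/Γ(α/2)) ∫_λ^∞ ρ^{α-1} e^{-ρ²} dρ. Then W_α is infinitely differentiable on (0,∞)×(0,∞), satisfies ∂_t W_α(x,t) = x^{2(α-1)/α} ∂_{xx} W_α(x,t) for all x, t > 0, satisfies ∂_t W_α(x,t) = K_α(x,t) for all x, t > 0, and has the boundary behavior: for every t > 0, W_α(x,t) → 1 as x → 0⁺ and W_α(x,t) → 0 as x → ∞; and for every x > 0, W_α(x,t) → 0 as t → 0⁺. -/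

import Mathlib

open MeasureTheory Filter Set

/-- The generalized complementary (Gaussian) error function
`E_α(λ) = (2/Γ(α/2)) ∫_λ^∞ ρ^{α-1} e^{-ρ²} dρ`. -/
noncomputable def Ef (α lam : ℝ) : ℝ :=
  (2 / Real.Gamma (α / 2)) * ∫ ρ in Set.Ioi lam, ρ ^ (α - 1) * Real.exp (-ρ ^ 2)

/-- The kernel `K_α(x,t) = (α^α/(2^α Γ(α/2))) x t^{-(α/2+1)} exp(-α² x^{2/α}/(4t))`. -/
noncomputable def Kker (α x t : ℝ) : ℝ :=
  (α ^ α / (2 ^ α * Real.Gamma (α / 2))) * x * t ^ (-(α / 2 + 1)) *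
    Real.exp (-(α ^ 2) * x ^ (2 / α) / (4 * t))

/-- `W_α(x,t) = E_α(α x^{1/α}/(2 t^{1/2}))`. -/
noncomputable def Wf (α x t : ℝ) : ℝ :=
  Ef α (α * x ^ (1 / α) / (2 * t ^ ((1 : ℝ) / 2)))

namespace Aux

variable {α : ℝ}

/-- the integrand -/
noncomputable def ef (α ρ : ℝ) : ℝ := ρ ^ (α - 1) * Real.exp (-ρ ^ 2)

lemma ef_int (hα : 0 < α) : IntegrableOn (ef α) (Set.Ioi 0) := by
  have h := integrableOn_rpow_mul_exp_neg_rpow (by linarith : (-1:ℝ) < α - 1)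
    (by norm_num : (0:ℝ) < 2)
  refine h.congr_fun (fun x _ => ?_) measurableSet_Ioi
  simp only [Real.rpow_two, ef]

lemma ef_int_Ioi (hα : 0 < α) {a : ℝ} (ha : 0 ≤ a) : IntegrableOn (ef α) (Set.Ioi a) :=
  (ef_int hα).mono_set (Ioi_subset_Ioi ha)

lemma ef_val (hα : 0 < α) :
    ∫ ρ in Set.Ioi (0:ℝ), ef α ρ = Real.Gamma (α/2) / 2 := by
  have h := integral_rpow_mul_exp_neg_rpow (by norm_num : (0:ℝ) < 2)
    (by linarith : (-1:ℝ) < α - 1)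
  rw [show ((α - 1 + 1) / 2) = α / 2 by ring] at h
  rw [show (∫ ρ in Set.Ioi (0:ℝ), ef α ρ) = ∫ x in Set.Ioi (0:ℝ), x ^ (α-1) * Real.exp (-x ^ (2:ℝ)) from
    setIntegral_congr_fun measurableSet_Ioi (fun x _ => by rw [Real.rpow_two, ef]), h]
  ring

lemma ef_split (hα : 0 < α) {a b : ℝ} (ha : 0 ≤ a) (hab : a ≤ b) :
    ∫ ρ in Set.Ioi a, ef α ρ = (∫ ρ in a..b, ef α ρ) + ∫ ρ in Set.Ioi b, ef α ρ := by
  rw [intervalIntegral.integral_of_le hab, ← setIntegral_union Ioc_disjoint_Ioi_same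
    measurableSet_Ioi ((ef_int_Ioi hα ha).mono_set Ioc_subset_Ioi_self)
    (ef_int_Ioi hα (ha.trans hab)), Ioc_union_Ioi_eq_Ioi hab]

lemma Ef_eq (hα : 0 < α) {a b : ℝ} (ha : 0 ≤ a) (hab : a ≤ b) :
    Ef α b = Ef α a - (2 / Real.Gamma (α / 2)) * ∫ ρ in a..b, ef α ρ := by
  have h := ef_split hα ha hab
  simp only [Ef, ef] at *
  rw [h]; ring

lemma ef_contAt {x : ℝ} (hx : 0 < x) : ContinuousAt (ef α) x := by
  exact (Real.continuousAt_rpow_const x (α - 1) (Or.inl hx.ne')).mul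
    (Real.continuous_exp.comp (continuous_pow 2).neg).continuousAt

lemma hasDerivAt_Ef (hα : 0 < α) {lam : ℝ} (h : 0 < lam) :
    HasDerivAt (Ef α) (-((2 / Real.Gamma (α / 2)) * ef α lam)) lam := by
  set a := lam / 2 with ha
  have ha0 : 0 < a := by positivity
  have hmem : Set.Ioi a ∈ nhds lam := Ioi_mem_nhds (by rw [ha]; linarith)
  have heq : Ef α =ᶠ[nhds lam]
      fun μ => Ef α a - (2 / Real.Gamma (α / 2)) * ∫ ρ in a..μ, ef α ρ := by
    filter_upwards [hmem] with μ hμ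
    exact Ef_eq hα ha0.le (le_of_lt hμ)
  have hint : IntervalIntegrable (ef α) volume a lam :=
    (intervalIntegrable_iff_integrableOn_Ioc_of_le (by rw [ha]; linarith)).mpr
      ((ef_int_Ioi hα ha0.le).mono_set Ioc_subset_Ioi_self)
  have hmeas : StronglyMeasurableAtFilter (ef α) (nhds lam) :=
    ⟨Set.Ioi a, hmem, ContinuousOn.aestronglyMeasurable
      (fun x hx => (ef_contAt (ha0.trans hx)).continuousWithinAt) measurableSet_Ioi⟩
  have hFTC := intervalIntegral.integral_hasDerivAt_right hint hmeas (ef_contAt h)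
  have h2 : HasDerivAt (fun μ => Ef α a - (2 / Real.Gamma (α / 2)) * ∫ ρ in a..μ, ef α ρ)
      (-((2 / Real.Gamma (α / 2)) * ef α lam)) lam := by
    simpa using ((hFTC.const_mul (2 / Real.Gamma (α / 2))).const_sub (Ef α a))
  exact h2.congr_of_eventuallyEq heq

lemma ef_smooth (hα : 0 < α) :
    ContDiffOn ℝ (⊤ : ℕ∞) (ef α) (Set.Ioi 0) := by
  intro x hx
  exact (((Real.contDiffAt_rpow_const_of_ne (ne_of_gt hx)).mul
    ((Real.contDiff_exp.contDiffAt).comp x ((contDiffAt_id.pow 2).neg))).contDiffWithinAt)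

lemma Ef_smooth (hα : 0 < α) :
    ContDiffOn ℝ (⊤ : ℕ∞) (Ef α) (Set.Ioi 0) := by
  rw [show ((⊤ : ℕ∞) : WithTop ℕ∞) = (⊤ : ℕ∞) from rfl]
  rw [contDiffOn_infty_iff_deriv_of_isOpen isOpen_Ioi]
  constructor
  · exact fun x hx => ((hasDerivAt_Ef hα hx).differentiableAt).differentiableWithinAt
  · have : ∀ x ∈ Set.Ioi (0:ℝ), deriv (Ef α) x = -((2 / Real.Gamma (α / 2)) * ef α x) :=
      fun x hx => (hasDerivAt_Ef hα hx).deriv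
    exact (((ef_smooth hα).const_smul (2 / Real.Gamma (α / 2))).neg.congr
      (by intro x hx; rw [this x hx]; simp [smul_eq_mul]))

lemma Ef_tendsto_zero (hα : 0 < α) : Tendsto (Ef α) atTop (nhds 0) := by
  have h1 : Tendsto (fun b => ∫ ρ in (0:ℝ)..b, ef α ρ) atTop
      (nhds (∫ ρ in Set.Ioi (0:ℝ), ef α ρ)) :=
    intervalIntegral_tendsto_integral_Ioi 0 (ef_int hα) tendsto_id
  have h2 : Tendsto (fun b => Ef α 0 - (2 / Real.Gamma (α / 2)) * ∫ ρ in (0:ℝ)..b, ef α ρ)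
      atTop (nhds (Ef α 0 - (2 / Real.Gamma (α / 2)) * ∫ ρ in Set.Ioi (0:ℝ), ef α ρ)) :=
    (tendsto_const_nhds.sub (h1.const_mul _))
  have h3 : Ef α 0 - (2 / Real.Gamma (α / 2)) * ∫ ρ in Set.Ioi (0:ℝ), ef α ρ = 0 := by
    simp [Ef, ef]
  rw [h3] at h2
  refine h2.congr' ?_
  filter_upwards [eventually_ge_atTop (0:ℝ)] with b hb
  exact (Ef_eq hα le_rfl hb).symm

lemma Ef_tendsto_one (hα : 0 < α) : Tendsto (Ef α) (nhdsWithin 0 (Set.Ioi 0)) (nhds 1) := by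
  have hΓ : 0 < Real.Gamma (α / 2) := Real.Gamma_pos_of_pos (by linarith)
  have hint : IntegrableOn (ef α) (Set.Icc (0:ℝ) 1) :=
    (integrableOn_Icc_iff_integrableOn_Ioc).mpr ((ef_int hα).mono_set Ioc_subset_Ioi_self)
  have hcont : ContinuousOn (fun x => ∫ t in Set.Ioc (0:ℝ) x, ef α t) (Set.Icc (0:ℝ) 1) :=
    intervalIntegral.continuousOn_primitive hint
  have h0 : ContinuousWithinAt (fun x => ∫ t in Set.Ioc (0:ℝ) x, ef α t) (Set.Icc (0:ℝ) 1) 0 :=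
    hcont 0 (by simp)
  have h1 : Tendsto (fun x => ∫ t in Set.Ioc (0:ℝ) x, ef α t) (nhdsWithin 0 (Set.Ioi 0))
      (nhds 0) := by
    have := h0.tendsto
    simp only [Set.Ioc_self, MeasureTheory.setIntegral_empty] at this
    rw [← nhdsWithin_Ioc_eq_nhdsGT (zero_lt_one)]
    exact this.mono_left (nhdsWithin_mono 0 Ioc_subset_Icc_self)
  have h2 : Tendsto (fun b => Ef α 0 - (2 / Real.Gamma (α / 2)) * ∫ ρ in Set.Ioc (0:ℝ) b, ef α ρ)
      (nhdsWithin 0 (Set.Ioi 0)) (nhds (Ef α 0)) := by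
    have hc : Tendsto (fun _ : ℝ => Ef α 0) (nhdsWithin 0 (Set.Ioi 0)) (nhds (Ef α 0)) :=
      tendsto_const_nhds
    simpa using hc.sub (h1.const_mul (2 / Real.Gamma (α / 2)))
  have hval : Ef α 0 = 1 := by
    have := ef_val hα
    simp only [Ef, ef] at *
    rw [this]
    field_simp
  rw [hval] at h2
  refine h2.congr' ?_
  filter_upwards [self_mem_nhdsWithin] with b hb
  rw [Ef_eq hα le_rfl (le_of_lt hb), intervalIntegral.integral_of_le (le_of_lt hb), hval]

noncomputable def Lf (α x t : ℝ) : ℝ := α * x ^ (1/α) / (2 * t ^ ((1:ℝ)/2))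

lemma Lf_pos (hα : 0 < α) {x t : ℝ} (hx : 0 < x) (ht : 0 < t) : 0 < Lf α x t := by
  unfold Lf
  have h1 : 0 < x ^ (1/α) := Real.rpow_pos_of_pos hx _
  have h2 : 0 < t ^ ((1:ℝ)/2) := Real.rpow_pos_of_pos ht _
  positivity

lemma hasDerivAt_Lf_x (hα : 0 < α) {x t : ℝ} (hx : 0 < x) (ht : 0 < t) :
    HasDerivAt (fun y => Lf α y t) (Lf α x t / (α * x)) x := by
  have h1 : HasDerivAt (fun y : ℝ => y ^ (1/α)) ((1/α) * x ^ (1/α - 1)) x :=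
    Real.hasDerivAt_rpow_const (Or.inl hx.ne')
  have h2 := (h1.const_mul α).div_const (2 * t ^ ((1:ℝ)/2))
  refine h2.congr_deriv ?_
  have ht2 : (0:ℝ) < t ^ ((1:ℝ)/2) := Real.rpow_pos_of_pos ht _
  rw [Real.rpow_sub hx, Real.rpow_one]
  unfold Lf
  field_simp

lemma hasDerivAt_Lf_t (hα : 0 < α) {x t : ℝ} (hx : 0 < x) (ht : 0 < t) :
    HasDerivAt (fun s => Lf α x s) (-(Lf α x t)/(2*t)) t := by
  have h1 : HasDerivAt (fun s : ℝ => 2 * s ^ ((1:ℝ)/2)) (2 * ((1/2) * t ^ ((1:ℝ)/2 - 1))) t :=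
    (Real.hasDerivAt_rpow_const (Or.inl ht.ne')).const_mul 2
  have ht2 : (0:ℝ) < t ^ ((1:ℝ)/2) := Real.rpow_pos_of_pos ht _
  have h2 := (hasDerivAt_const t (α * x ^ (1/α))).div h1 (by positivity)
  have h3 : (fun s => Lf α x s) = fun s => (α * x ^ (1/α)) / (2 * s ^ ((1:ℝ)/2)) := rfl
  rw [h3]
  refine h2.congr_deriv ?_
  have hts : t ^ ((1:ℝ)/2 - 1) = t ^ ((1:ℝ)/2) / t := by
    rw [Real.rpow_sub ht, Real.rpow_one]
  have htsq : t ^ ((1:ℝ)/2) * t ^ ((1:ℝ)/2) = t := by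
    rw [← Real.rpow_add ht]; norm_num
  unfold Lf
  rw [hts]
  field_simp
  nlinarith [htsq, ht2.ne', ht.ne']

lemma Lf_sq (hα : 0 < α) {x t : ℝ} (hx : 0 < x) (ht : 0 < t) :
    Lf α x t ^ 2 = α^2 * x ^ (2/α) / (4*t) := by
  unfold Lf
  rw [div_pow, mul_pow, mul_pow]
  have h1 : (x ^ (1/α)) ^ 2 = x ^ (2/α) := by
    rw [← Real.rpow_natCast (x ^ (1/α)) 2, ← Real.rpow_mul hx.le,
      show (1/α * ((2:ℕ):ℝ)) = 2/α by push_cast; ring]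
  have h2 : (t ^ ((1:ℝ)/2)) ^ 2 = t := by
    rw [← Real.rpow_natCast (t ^ ((1:ℝ)/2)) 2, ← Real.rpow_mul ht.le]
    norm_num
  rw [h1, h2]
  norm_num

lemma Lf_rpow (hα : 0 < α) {x t : ℝ} (hx : 0 < x) (ht : 0 < t) :
    Lf α x t ^ α = α^α * x / (2^α * t ^ (α/2)) := by
  unfold Lf
  have h1 : (0:ℝ) ≤ x ^ (1/α) := (Real.rpow_pos_of_pos hx _).le
  have h2 : (0:ℝ) ≤ t ^ ((1:ℝ)/2) := (Real.rpow_pos_of_pos ht _).le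
  rw [Real.div_rpow (by positivity) (by positivity), Real.mul_rpow hα.le h1,
    Real.mul_rpow (by norm_num) h2, ← Real.rpow_mul hx.le, ← Real.rpow_mul ht.le,
    show 1/α*α = 1 by field_simp, Real.rpow_one, show (1:ℝ)/2*α = α/2 by ring]

lemma Wf_eq (α x t : ℝ) : Wf α x t = Ef α (Lf α x t) := rfl

lemma hasDerivAt_Wf_t (hα : 0 < α) {x t : ℝ} (hx : 0 < x) (ht : 0 < t) :
    HasDerivAt (fun s => Wf α x s)
      ((2 / Real.Gamma (α/2)) * (Lf α x t ^ α * Real.exp (-(Lf α x t)^2)) / (2*t)) t := by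
  have hL : 0 < Lf α x t := Lf_pos hα hx ht
  have h1 := (hasDerivAt_Ef hα hL).comp t (hasDerivAt_Lf_t hα hx ht)
  have h2 : (fun s => Wf α x s) = fun s => Ef α (Lf α x s) := rfl
  rw [h2]
  refine h1.congr_deriv ?_
  have hP : Lf α x t ^ (α - 1) = Lf α x t ^ α / Lf α x t := by
    rw [Real.rpow_sub hL, Real.rpow_one]
  rw [ef, hP]
  field_simp

lemma hasDerivAt_Wf_x (hα : 0 < α) {x t : ℝ} (hx : 0 < x) (ht : 0 < t) :
    HasDerivAt (fun y => Wf α y t)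
      (-(2 / Real.Gamma (α/2) / α) * (Lf α x t ^ α * Real.exp (-(Lf α x t)^2) / x)) x := by
  have hL : 0 < Lf α x t := Lf_pos hα hx ht
  have h1 := (hasDerivAt_Ef hα hL).comp x (hasDerivAt_Lf_x hα hx ht)
  have h2 : (fun y => Wf α y t) = fun y => Ef α (Lf α y t) := rfl
  rw [h2]
  refine h1.congr_deriv ?_
  have hP : Lf α x t ^ (α - 1) = Lf α x t ^ α / Lf α x t := by
    rw [Real.rpow_sub hL, Real.rpow_one]
  rw [ef, hP]
  field_simp

lemma hasDerivAt_Wf_xx (hα : 0 < α) {x t : ℝ} (hx : 0 < x) (ht : 0 < t) :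
    HasDerivAt (fun y => -(2 / Real.Gamma (α/2) / α) *
        (Lf α y t ^ α * Real.exp (-(Lf α y t)^2) / y))
      (2 * (2 / Real.Gamma (α/2)) / α^2 *
        (Lf α x t ^ α * Lf α x t ^ 2 * Real.exp (-(Lf α x t)^2)) / x^2) x := by
  have hL : 0 < Lf α x t := Lf_pos hα hx ht
  have hLd := hasDerivAt_Lf_x hα hx ht
  have h1 : HasDerivAt (fun y => Lf α y t ^ α)
      (α * Lf α x t ^ (α - 1) * (Lf α x t / (α * x))) x :=
    HasDerivAt.comp (h₂ := fun u => u ^ α) x (Real.hasDerivAt_rpow_const (Or.inl hL.ne')) hLd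
  have h2 : HasDerivAt (fun y => Real.exp (-(Lf α y t)^2))
      (Real.exp (-(Lf α x t)^2) * (-(2 * Lf α x t ^ 1 * (Lf α x t / (α * x))))) x :=
    ((hLd.pow 2).neg).exp
  have h3 := h1.mul h2
  have h4 := h3.div (hasDerivAt_id x) hx.ne'
  have h5 := h4.const_mul (-(2 / Real.Gamma (α/2) / α))
  refine h5.congr_deriv ?_
  have hP : Lf α x t ^ (α - 1) = Lf α x t ^ α / Lf α x t := by
    rw [Real.rpow_sub hL, Real.rpow_one]
  rw [hP]
  simp only [id, Pi.mul_apply]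
  field_simp
  ring

lemma deriv_Wf_t (hα : 0 < α) {x t : ℝ} (hx : 0 < x) (ht : 0 < t) :
    deriv (fun s => Wf α x s) t =
      (2 / Real.Gamma (α/2)) * (Lf α x t ^ α * Real.exp (-(Lf α x t)^2)) / (2*t) :=
  (hasDerivAt_Wf_t hα hx ht).deriv

lemma iteratedDeriv_Wf (hα : 0 < α) {x t : ℝ} (hx : 0 < x) (ht : 0 < t) :
    iteratedDeriv 2 (fun y => Wf α y t) x =
      2 * (2 / Real.Gamma (α/2)) / α^2 *
        (Lf α x t ^ α * Lf α x t ^ 2 * Real.exp (-(Lf α x t)^2)) / x^2 := by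
  rw [iteratedDeriv_succ, iteratedDeriv_one]
  have hev : deriv (fun y => Wf α y t) =ᶠ[nhds x]
      fun y => -(2 / Real.Gamma (α/2) / α) *
        (Lf α y t ^ α * Real.exp (-(Lf α y t)^2) / y) := by
    filter_upwards [Ioi_mem_nhds hx] with y hy
    exact (hasDerivAt_Wf_x hα hy ht).deriv
  rw [hev.deriv_eq]
  exact (hasDerivAt_Wf_xx hα hx ht).deriv

lemma pde (hα : 0 < α) {x t : ℝ} (hx : 0 < x) (ht : 0 < t) :
    deriv (fun s => Wf α x s) t =
      x ^ (2 * (α - 1) / α) * iteratedDeriv 2 (fun y => Wf α y t) x := by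
  rw [deriv_Wf_t hα hx ht, iteratedDeriv_Wf hα hx ht]
  have hL : 0 < Lf α x t := Lf_pos hα hx ht
  have hΓ : 0 < Real.Gamma (α/2) := Real.Gamma_pos_of_pos (by linarith)
  have hxp : x ^ (2 * (α - 1) / α) = x ^ 2 / x ^ (2/α) := by
    rw [show 2 * (α - 1) / α = 2 - 2/α by field_simp, Real.rpow_sub hx, Real.rpow_two]
  have hx2 : (0:ℝ) < x ^ (2/α) := Real.rpow_pos_of_pos hx _
  rw [hxp, Lf_sq hα hx ht]
  field_simp
  ring

lemma deriv_eq_K (hα : 0 < α) {x t : ℝ} (hx : 0 < x) (ht : 0 < t) :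
    deriv (fun s => Wf α x s) t = Kker α x t := by
  rw [deriv_Wf_t hα hx ht, Lf_sq hα hx ht, Lf_rpow hα hx ht]
  have hΓ : 0 < Real.Gamma (α/2) := Real.Gamma_pos_of_pos (by linarith)
  have hta : (0:ℝ) < t ^ (α/2) := Real.rpow_pos_of_pos ht _
  have h2a : (0:ℝ) < (2:ℝ) ^ α := Real.rpow_pos_of_pos (by norm_num) _
  rw [Kker, Real.rpow_neg ht.le, Real.rpow_add ht, Real.rpow_one,
    show -(α^2) * x ^ (2/α) / (4*t) = -(α^2 * x ^ (2/α) / (4*t)) by ring]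
  field_simp

lemma Wf_smooth (hα : 0 < α) :
    ContDiffOn ℝ (⊤ : ℕ∞) (fun p : ℝ × ℝ => Wf α p.1 p.2) (Set.Ioi 0 ×ˢ Set.Ioi 0) := by
  have hLs : ContDiffOn ℝ (⊤ : ℕ∞) (fun p : ℝ × ℝ => Lf α p.1 p.2)
      (Set.Ioi 0 ×ˢ Set.Ioi 0) := by
    intro p hp
    obtain ⟨hp1, hp2⟩ := hp
    refine ContDiffAt.contDiffWithinAt ?_
    refine ContDiffAt.div ?_ ?_ ?_
    · exact contDiffAt_const.mul
        ((Real.contDiffAt_rpow_const_of_ne (ne_of_gt hp1)).comp p contDiffAt_fst)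
    · exact contDiffAt_const.mul
        ((Real.contDiffAt_rpow_const_of_ne (ne_of_gt hp2)).comp p contDiffAt_snd)
    · have := Real.rpow_pos_of_pos hp2 ((1:ℝ)/2)
      positivity
  have hmaps : Set.MapsTo (fun p : ℝ × ℝ => Lf α p.1 p.2)
      (Set.Ioi 0 ×ˢ Set.Ioi 0) (Set.Ioi 0) := fun p hp => Lf_pos hα hp.1 hp.2
  exact (Ef_smooth hα).comp hLs hmaps

lemma tendsto_one (hα : 0 < α) {t : ℝ} (ht : 0 < t) :
    Tendsto (fun x => Wf α x t) (nhdsWithin 0 (Set.Ioi 0)) (nhds 1) := by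
  have hLt : Tendsto (fun x => Lf α x t) (nhdsWithin 0 (Set.Ioi 0))
      (nhdsWithin 0 (Set.Ioi 0)) := by
    rw [tendsto_nhdsWithin_iff]
    constructor
    · have h0 : Tendsto (fun x : ℝ => x ^ (1/α)) (nhds 0) (nhds 0) := by
        have := (Real.continuousAt_rpow_const 0 (1/α) (Or.inr (by positivity))).tendsto
        rwa [Real.zero_rpow (by positivity)] at this
      have h4 := ((h0.mono_left (nhdsWithin_le_nhds (s := Set.Ioi 0))).const_mul α).div_const
        (2 * t ^ ((1:ℝ)/2))
      simp only [mul_zero, zero_div] at h4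
      exact h4
    · filter_upwards [self_mem_nhdsWithin] with x hx
      exact Lf_pos hα hx ht
  exact (Ef_tendsto_one hα).comp hLt

lemma tendsto_zero_x (hα : 0 < α) {t : ℝ} (ht : 0 < t) :
    Tendsto (fun x => Wf α x t) atTop (nhds 0) := by
  have hLt : Tendsto (fun x => Lf α x t) atTop atTop := by
    have h := (tendsto_rpow_atTop (show 0 < 1/α by positivity)).atTop_mul_const
      (show 0 < α / (2 * t ^ ((1:ℝ)/2)) by
        have := Real.rpow_pos_of_pos ht ((1:ℝ)/2); positivity)
    refine h.congr (fun x => ?_)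
    rw [Lf]; ring
  exact (Ef_tendsto_zero hα).comp hLt

lemma tendsto_zero_t (hα : 0 < α) {x : ℝ} (hx : 0 < x) :
    Tendsto (fun s => Wf α x s) (nhdsWithin 0 (Set.Ioi 0)) (nhds 0) := by
  have h1 : Tendsto (fun s : ℝ => 2 * s ^ ((1:ℝ)/2)) (nhdsWithin 0 (Set.Ioi 0))
      (nhdsWithin 0 (Set.Ioi 0)) := by
    rw [tendsto_nhdsWithin_iff]
    constructor
    · have h0 : Tendsto (fun s : ℝ => s ^ ((1:ℝ)/2)) (nhds 0) (nhds 0) := by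
        have := (Real.continuousAt_rpow_const 0 ((1:ℝ)/2) (Or.inr (by norm_num))).tendsto
        rwa [Real.zero_rpow (by norm_num)] at this
      have h4 := (h0.mono_left (nhdsWithin_le_nhds (s := Set.Ioi 0))).const_mul (2:ℝ)
      simp only [mul_zero] at h4
      exact h4
    · filter_upwards [self_mem_nhdsWithin] with s hs
      have := Real.rpow_pos_of_pos hs ((1:ℝ)/2)
      exact Set.mem_Ioi.mpr (by positivity)
  have h2 := tendsto_inv_nhdsGT_zero.comp h1
  have h3 := h2.const_mul_atTop (show 0 < α * x ^ (1/α) by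
    have := Real.rpow_pos_of_pos hx (1/α); positivity)
  have hLt : Tendsto (fun s => Lf α x s) (nhdsWithin 0 (Set.Ioi 0)) atTop := by
    refine h3.congr (fun s => ?_)
    rw [Lf, div_eq_mul_inv]
    rfl
  exact (Ef_tendsto_zero hα).comp hLt

end Aux

theorem stmt2 (α : ℝ) (hα : 0 < α) :
    ContDiffOn ℝ (⊤ : ℕ∞) (fun p : ℝ × ℝ => Wf α p.1 p.2) (Set.Ioi 0 ×ˢ Set.Ioi 0) ∧
    (∀ x t : ℝ, 0 < x → 0 < t →
      deriv (fun s => Wf α x s) t =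
        x ^ (2 * (α - 1) / α) * iteratedDeriv 2 (fun y => Wf α y t) x) ∧
    (∀ x t : ℝ, 0 < x → 0 < t → deriv (fun s => Wf α x s) t = Kker α x t) ∧
    (∀ t : ℝ, 0 < t →
      Tendsto (fun x => Wf α x t) (nhdsWithin 0 (Set.Ioi 0)) (nhds 1)) ∧
    (∀ t : ℝ, 0 < t → Tendsto (fun x => Wf α x t) atTop (nhds 0)) ∧
    (∀ x : ℝ, 0 < x →
      Tendsto (fun s => Wf α x s) (nhdsWithin 0 (Set.Ioi 0)) (nhds 0)) :=
  ⟨Aux.Wf_smooth hα, fun _ _ hx ht => Aux.pde hα hx ht,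
    fun _ _ hx ht => Aux.deriv_eq_K hα hx ht, fun _ ht => Aux.tendsto_one hα ht,
    fun _ ht => Aux.tendsto_zero_x hα ht, fun _ hx => Aux.tendsto_zero_t hα hx⟩
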